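/- Let N, M ≥ 0 be integers and g > 0 a real number. On the region U, the dCS ground state Ψ₀ is a pointwise eigenfunction of the deformed Calogero–Sutherland operator: H_{N,M}(x,y;g) Ψ₀ = E₀ · Ψ₀ on U, where E₀ = (g²/12)·[(N − M/g)³ − (N − M/g³)]. -/

import Mathlib

open Finset


noncomputable section
def ctg (s : ℝ) : ℝ := Real.cos s / Real.sin s

lemma ctg_zero : ctg 0 = 0 := by simp [ctg]

lemma ctg_neg (s : ℝ) : ctg (-s) = -ctg s := by
  simp [ctg, Real.cos_neg, Real.sin_neg, neg_div, div_neg]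

/-- `p`-weights: `g` for the first `N` coordinates, `-1` for the rest. -/
def pfun (N : ℕ) (g : ℝ) {n : ℕ} (i : Fin n) : ℝ := if (i : ℕ) < N then g else -1

lemma pfun_castAdd (N M : ℕ) (g : ℝ) (j : Fin N) : pfun N g (Fin.castAdd M j) = g := by
  simp [pfun, j.isLt]

lemma pfun_natAdd (N M : ℕ) (g : ℝ) (k : Fin M) : pfun N g (Fin.natAdd N k) = -1 := by
  simp [pfun]

lemma pfun_mem (N : ℕ) (g : ℝ) {n : ℕ} (i : Fin n) : pfun N g i = g ∨ pfun N g i = -1 := by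
  unfold pfun; split_ifs <;> tauto

lemma castAdd_lt_castAdd {N M : ℕ} (j j' : Fin N) :
    Fin.castAdd M j < Fin.castAdd M j' ↔ j < j' := by
  simp only [Fin.lt_def, Fin.coe_castAdd]

lemma castAdd_lt_natAdd {N M : ℕ} (j : Fin N) (k : Fin M) :
    Fin.castAdd M j < Fin.natAdd N k := by
  simp only [Fin.lt_def, Fin.coe_castAdd, Fin.coe_natAdd]
  omega

lemma not_natAdd_lt_castAdd {N M : ℕ} (k : Fin M) (j : Fin N) :
    ¬ (Fin.natAdd N k < Fin.castAdd M j) := by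
  simp only [Fin.lt_def, Fin.coe_castAdd, Fin.coe_natAdd]
  omega

lemma natAdd_lt_natAdd {N M : ℕ} (k k' : Fin M) :
    Fin.natAdd N k < Fin.natAdd N k' ↔ k < k' := by
  simp only [Fin.lt_def, Fin.coe_natAdd]
  omega

/-- Symmetric pair-sums: the off-diagonal sum is twice the ordered sum. -/
lemma sym_pair_sum {n : ℕ} (F : Fin n → Fin n → ℝ) (hF : ∀ a b, F a b = F b a) :
    ∑ a, ∑ b, (if a = b then 0 else F a b) = 2 * ∑ a, ∑ b, (if a < b then F a b else 0) := by
  have key : ∀ a b : Fin n, (if a = b then (0:ℝ) else F a b)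
      = (if a < b then F a b else 0) + (if b < a then F a b else 0) := by
    intro a b
    rcases lt_trichotomy a b with h | h | h
    · rw [if_neg h.ne, if_pos h, if_neg (asymm h)]; ring
    · rw [if_pos h, if_neg (by simp [h]), if_neg (by simp [h])]; ring
    · rw [if_neg (h.ne'), if_neg (asymm h), if_pos h]; ring
  have h2 : ∑ a : Fin n, ∑ b : Fin n, (if b < a then F a b else 0)
      = ∑ a : Fin n, ∑ b : Fin n, (if a < b then F a b else 0) := by
    rw [Finset.sum_comm]
    exact Finset.sum_congr rfl fun a _ => Finset.sum_congr rfl fun b _ => by rw [hF b a]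
  calc ∑ a, ∑ b, (if a = b then (0:ℝ) else F a b)
      = ∑ a : Fin n, ∑ b : Fin n,
          ((if a < b then F a b else 0) + (if b < a then F a b else 0)) :=
        Finset.sum_congr rfl fun a _ => Finset.sum_congr rfl fun b _ => key a b
    _ = (∑ a : Fin n, ∑ b : Fin n, (if a < b then F a b else 0))
        + ∑ a : Fin n, ∑ b : Fin n, (if b < a then F a b else 0) := by
        rw [← Finset.sum_add_distrib]
        exact Finset.sum_congr rfl fun a _ => Finset.sum_add_distrib
    _ = 2 * ∑ a, ∑ b, (if a < b then F a b else 0) := by rw [h2]; ring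

/-- Splitting an ordered pair-sum over `Fin (N+M)` into blocks. -/
lemma pair_sum_blocks (N M : ℕ) (F : Fin (N + M) → Fin (N + M) → ℝ) :
    ∑ a, ∑ b, (if a < b then F a b else 0)
    = (∑ j : Fin N, ∑ j' : Fin N,
        if j < j' then F (Fin.castAdd M j) (Fin.castAdd M j') else 0)
      + (∑ k : Fin M, ∑ k' : Fin M,
        if k < k' then F (Fin.natAdd N k) (Fin.natAdd N k') else 0)
      + ∑ j : Fin N, ∑ k : Fin M, F (Fin.castAdd M j) (Fin.natAdd N k) := by
  rw [Fin.sum_univ_add (f := fun a => ∑ b, (if a < b then F a b else 0))]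
  have h1 : ∀ j : Fin N, ∑ b, (if Fin.castAdd M j < b then F (Fin.castAdd M j) b else 0)
      = (∑ j' : Fin N, if j < j' then F (Fin.castAdd M j) (Fin.castAdd M j') else 0)
        + ∑ k : Fin M, F (Fin.castAdd M j) (Fin.natAdd N k) := by
    intro j
    rw [Fin.sum_univ_add (f := fun b => if Fin.castAdd M j < b then F (Fin.castAdd M j) b else 0)]
    exact congrArg₂ (· + ·)
      (Finset.sum_congr rfl fun j' _ => by rw [if_congr (castAdd_lt_castAdd j j') rfl rfl])
      (Finset.sum_congr rfl fun k _ => by rw [if_pos (castAdd_lt_natAdd j k)])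
  have h2 : ∀ k : Fin M, ∑ b, (if Fin.natAdd N k < b then F (Fin.natAdd N k) b else 0)
      = ∑ k' : Fin M, if k < k' then F (Fin.natAdd N k) (Fin.natAdd N k') else 0 := by
    intro k
    rw [Fin.sum_univ_add (f := fun b => if Fin.natAdd N k < b then F (Fin.natAdd N k) b else 0)]
    have : ∑ j : Fin N, (if Fin.natAdd N k < Fin.castAdd M j
        then F (Fin.natAdd N k) (Fin.castAdd M j) else 0) = 0 := by
      rw [Finset.sum_eq_zero]
      intro j _
      rw [if_neg (not_natAdd_lt_castAdd k j)]
    rw [Finset.sum_congr rfl fun j _ => rfl, this, zero_add]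
    exact Finset.sum_congr rfl fun k' _ => by rw [if_congr (natAdd_lt_natAdd k k') rfl rfl]
  rw [Finset.sum_congr rfl fun j _ => h1 j, Finset.sum_congr rfl fun k _ => h2 k,
    Finset.sum_add_distrib]
  ring






lemma ctg_sq (s : ℝ) (h : Real.sin s ≠ 0) : ctg s ^ 2 = 1 / Real.sin s ^ 2 - 1 := by
  have h2 := Real.sin_sq_add_cos_sq s
  field_simp [ctg]
  unfold ctg
  field_simp
  nlinarith [h2]

/-- The cotangent triple identity. -/
lemma ctg_triple (a b : ℝ) (ha : Real.sin a ≠ 0) (hb : Real.sin b ≠ 0)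
    (hab : Real.sin (a + b) ≠ 0) :
    ctg a * ctg (a + b) - ctg a * ctg b + ctg (a + b) * ctg b = -1 := by
  unfold ctg
  rw [Real.sin_add, Real.cos_add] at *
  field_simp
  nlinarith [Real.sin_sq_add_cos_sq a, Real.sin_sq_add_cos_sq b]

lemma hasDerivAt_logsin (c t : ℝ) (h : Real.sin ((t - c) / 2) ≠ 0) :
    HasDerivAt (fun s : ℝ => Real.log (Real.sin ((s - c) / 2))) (ctg ((t - c) / 2) / 2) t := by
  have h1 : HasDerivAt (fun s : ℝ => (s - c) / 2) (1 / 2) t := by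
    simpa using ((hasDerivAt_id t).sub_const c).div_const 2
  have h2 := (Real.hasDerivAt_sin ((t - c) / 2)).comp t h1
  have h3 := (Real.hasDerivAt_log h).comp t h2
  refine h3.congr_deriv ?_
  unfold ctg
  field_simp

lemma hasDerivAt_ctg (c t : ℝ) (h : Real.sin ((t - c) / 2) ≠ 0) :
    HasDerivAt (fun s : ℝ => ctg ((s - c) / 2)) (-(1 / (2 * Real.sin ((t - c) / 2) ^ 2))) t := by
  have h1 : HasDerivAt (fun s : ℝ => (s - c) / 2) (1 / 2) t := by
    simpa using ((hasDerivAt_id t).sub_const c).div_const 2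
  have h2 := (Real.hasDerivAt_sin ((t - c) / 2)).comp t h1
  have h2' := (Real.hasDerivAt_cos ((t - c) / 2)).comp t h1
  have h3 := h2'.div h2 h
  refine h3.congr_deriv ?_
  have h4 := Real.sin_sq_add_cos_sq ((t - c) / 2)
  simp only [Function.comp_apply]
  field_simp
  nlinarith [h4]



section Alg
variable {n : ℕ}

lemma ite_dec (P Q R : Prop) [Decidable P] [Decidable Q] [Decidable R]
    (hPQ : P → Q → R) (hPR : P → R → Q) (hQR : Q → R → P) (w : ℝ) :
    (if P ∨ Q ∨ R then (0:ℝ) else -w)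
      = -w + (if P then w else 0) + (if Q then w else 0) + (if R then w else 0)
        - (if P then (if Q then 2 * w else 0) else 0) := by
  by_cases hP : P <;> by_cases hQ : Q <;> by_cases hR : R
  · simp [hP, hQ, hR] <;> ring
  · exact (hR (hPQ hP hQ)).elim
  · exact (hQ (hPR hP hR)).elim
  · simp [hP, hQ, hR]
  · exact (hP (hQR hQ hR)).elim
  · simp [hP, hQ, hR]
  · simp [hP, hQ, hR]
  · simp [hP, hQ, hR] <;> ring

lemma diag_split (X : Fin n → Fin n → ℝ) (b : Fin n) :
    ∑ c, X b c = X b b + ∑ c, (if b = c then 0 else X b c) := by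
  have h : ∀ c : Fin n, X b c = (if b = c then X b c else 0) + (if b = c then 0 else X b c) := by
    intro c; split_ifs <;> ring
  calc ∑ c, X b c = ∑ c, ((if b = c then X b c else 0) + (if b = c then 0 else X b c)) :=
        Finset.sum_congr rfl fun c _ => h c
    _ = (∑ c, if b = c then X b c else 0) + ∑ c, (if b = c then 0 else X b c) :=
        Finset.sum_add_distrib
    _ = X b b + ∑ c, (if b = c then 0 else X b c) := by rw [Finset.sum_ite_eq]; simp

lemma big_alg (g : ℝ) (hg : g ≠ 0) (p : Fin n → ℝ) (hp : ∀ i, p i = g ∨ p i = -1)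
    (C Q : Fin n → Fin n → ℝ)
    (hQ0 : ∀ a, Q a a = 0) (hC0 : ∀ a, C a a = 0)
    (hQs : ∀ a b, Q a b = Q b a)
    (hCsq : ∀ a b, a ≠ b → C a b ^ 2 = Q a b - 1)
    (htri : ∀ a b c, a ≠ b → a ≠ c → b ≠ c →
      C a b * C a c + C b a * C b c + C c a * C c b = -1) :
    ∑ i, ((1/4) * (∑ b, p b * Q i b) - p i / (4*g) * (∑ b, p b * C i b) ^ 2)
      + ∑ a, ∑ b, (g-1)/(4*g) * (p a * p b) * Q a b
    = ((∑ i, p i) ^ 3 - ∑ i, p i ^ 3) / (12 * g) := by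
  set P1 := ∑ i, p i with hP1
  set P2 := ∑ i, p i ^ 2 with hP2
  set P3 := ∑ i, p i ^ 3 with hP3
  -- the triple sum
  set T : ℝ := ∑ i, ∑ b, ∑ c, (if b = c then 0 else p i * p b * p c * (C i b * C i c)) with hT
  -- step 1: T is invariant under role permutations
  have hT2 : T = ∑ i, ∑ b, ∑ c, (if i = c then 0 else p b * p i * p c * (C b i * C b c)) := by
    rw [hT]; exact Finset.sum_comm
  have hT3 : T = ∑ i, ∑ b, ∑ c, (if b = i then 0 else p c * p b * p i * (C c b * C c i)) := by
    rw [hT]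
    calc ∑ i, ∑ b, ∑ c, (if b = c then 0 else p i * p b * p c * (C i b * C i c))
        = ∑ i, ∑ b, ∑ c, (if i = c then 0 else p b * p i * p c * (C b i * C b c)) :=
          Finset.sum_comm
      _ = ∑ i, ∑ b, ∑ c, (if i = b then 0 else p c * p i * p b * (C c i * C c b)) :=
          Finset.sum_congr rfl fun i _ => Finset.sum_comm
      _ = ∑ i, ∑ b, ∑ c, (if b = i then 0 else p c * p b * p i * (C c b * C c i)) :=
          Finset.sum_comm
  -- step 2: pointwise triple identity
  have key : ∀ i b c : Fin n,
      (if b = c then 0 else p i * p b * p c * (C i b * C i c))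
      + (if i = c then 0 else p b * p i * p c * (C b i * C b c))
      + (if b = i then 0 else p c * p b * p i * (C c b * C c i))
      = (if i = b ∨ i = c ∨ b = c then 0 else -(p i * p b * p c)) := by
    intro i b c
    by_cases h1 : i = b
    · subst h1; simp [hC0]
    · by_cases h2 : i = c
      · subst h2; simp [hC0]
      · by_cases h3 : b = c
        · subst h3; simp [hC0]
        · rw [if_neg h3, if_neg h2, if_neg (fun h => h1 h.symm),
            if_neg (by tauto : ¬(i = b ∨ i = c ∨ b = c))]
          have := htri i b c h1 h2 h3
          linear_combination (p i * p b * p c) * this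
  -- step 3: counting sums
  have hA0 : ∑ i : Fin n, ∑ b : Fin n, ∑ c : Fin n, p i * p b * p c = P1^3 := by
    have h1 : ∀ i b : Fin n, ∑ c, p i * p b * p c = p i * p b * P1 := fun i b => by
      rw [← Finset.mul_sum]
    have h2 : ∀ i : Fin n, ∑ b, p i * p b * P1 = p i * P1 * P1 := fun i => by
      have : ∀ b : Fin n, p i * p b * P1 = p i * P1 * p b := fun b => by ring
      rw [Finset.sum_congr rfl fun b _ => this b, ← Finset.mul_sum]
    have h3 : ∑ i, p i * P1 * P1 = P1 * P1 * P1 := by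
      have : ∀ i : Fin n, p i * P1 * P1 = P1 * P1 * p i := fun i => by ring
      rw [Finset.sum_congr rfl fun i _ => this i, ← Finset.mul_sum]
    calc ∑ i : Fin n, ∑ b : Fin n, ∑ c : Fin n, p i * p b * p c
        = ∑ i : Fin n, ∑ b : Fin n, p i * p b * P1 :=
          Finset.sum_congr rfl fun i _ => Finset.sum_congr rfl fun b _ => h1 i b
      _ = ∑ i : Fin n, p i * P1 * P1 := Finset.sum_congr rfl fun i _ => h2 i
      _ = P1^3 := by rw [h3]; ring
  have hA1 : ∑ i : Fin n, ∑ b : Fin n, ∑ c : Fin n,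
      (if i = b then p i * p b * p c else 0) = P2 * P1 := by
    have h1 : ∀ i b : Fin n, ∑ c, (if i = b then p i * p b * p c else 0)
        = (if i = b then p i * p b * P1 else 0) := fun i b => by
      by_cases h : i = b <;> simp [h, ← Finset.mul_sum, ← hP1]
    have h2 : ∀ i : Fin n, ∑ b, (if i = b then p i * p b * P1 else 0) = p i ^ 2 * P1 :=
      fun i => by rw [Finset.sum_ite_eq]; simp only [mem_univ, if_true]; ring
    calc ∑ i : Fin n, ∑ b : Fin n, ∑ c : Fin n, (if i = b then p i * p b * p c else 0)
        = ∑ i : Fin n, ∑ b : Fin n, (if i = b then p i * p b * P1 else 0) :=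
          Finset.sum_congr rfl fun i _ => Finset.sum_congr rfl fun b _ => h1 i b
      _ = ∑ i : Fin n, p i ^ 2 * P1 := Finset.sum_congr rfl fun i _ => h2 i
      _ = P2 * P1 := by rw [← Finset.sum_mul]
  have hA2 : ∑ i : Fin n, ∑ b : Fin n, ∑ c : Fin n,
      (if i = c then p i * p b * p c else 0) = P2 * P1 := by
    have h1 : ∀ i b : Fin n, ∑ c, (if i = c then p i * p b * p c else 0) = p i ^ 2 * p b :=
      fun i b => by rw [Finset.sum_ite_eq]; simp only [mem_univ, if_true]; ring
    have h2 : ∀ i : Fin n, ∑ b, p i ^ 2 * p b = p i ^ 2 * P1 := fun i => by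
      rw [← Finset.mul_sum]
    calc ∑ i : Fin n, ∑ b : Fin n, ∑ c : Fin n, (if i = c then p i * p b * p c else 0)
        = ∑ i : Fin n, ∑ b : Fin n, p i ^ 2 * p b :=
          Finset.sum_congr rfl fun i _ => Finset.sum_congr rfl fun b _ => h1 i b
      _ = ∑ i : Fin n, p i ^ 2 * P1 := Finset.sum_congr rfl fun i _ => h2 i
      _ = P2 * P1 := by rw [← Finset.sum_mul]
  have hA3 : ∑ i : Fin n, ∑ b : Fin n, ∑ c : Fin n,
      (if b = c then p i * p b * p c else 0) = P1 * P2 := by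
    have h1 : ∀ i b : Fin n, ∑ c, (if b = c then p i * p b * p c else 0) = p i * p b ^ 2 :=
      fun i b => by rw [Finset.sum_ite_eq]; simp only [mem_univ, if_true]; ring
    have h2 : ∀ i : Fin n, ∑ b, p i * p b ^ 2 = p i * P2 := fun i => by
      rw [← Finset.mul_sum]
    calc ∑ i : Fin n, ∑ b : Fin n, ∑ c : Fin n, (if b = c then p i * p b * p c else 0)
        = ∑ i : Fin n, ∑ b : Fin n, p i * p b ^ 2 :=
          Finset.sum_congr rfl fun i _ => Finset.sum_congr rfl fun b _ => h1 i b
      _ = ∑ i : Fin n, p i * P2 := Finset.sum_congr rfl fun i _ => h2 i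
      _ = P1 * P2 := by rw [← Finset.sum_mul]
  have hA4 : ∑ i : Fin n, ∑ b : Fin n, ∑ c : Fin n,
      (if i = b then (if i = c then 2 * (p i * p b * p c) else 0) else 0) = 2 * P3 := by
    have h1 : ∀ i b : Fin n, ∑ c, (if i = b then (if i = c then 2 * (p i * p b * p c) else 0) else 0)
        = (if i = b then 2 * (p i * p b * p i) else 0) := fun i b => by
      by_cases h : i = b <;> simp [h, Finset.sum_ite_eq]
    have h2 : ∀ i : Fin n, ∑ b, (if i = b then 2 * (p i * p b * p i) else 0) = 2 * p i ^ 3 :=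
      fun i => by rw [Finset.sum_ite_eq]; simp only [mem_univ, if_true]; ring
    calc ∑ i : Fin n, ∑ b : Fin n, ∑ c : Fin n,
          (if i = b then (if i = c then 2 * (p i * p b * p c) else 0) else 0)
        = ∑ i : Fin n, ∑ b : Fin n, (if i = b then 2 * (p i * p b * p i) else 0) :=
          Finset.sum_congr rfl fun i _ => Finset.sum_congr rfl fun b _ => h1 i b
      _ = ∑ i : Fin n, 2 * p i ^ 3 := Finset.sum_congr rfl fun i _ => h2 i
      _ = 2 * P3 := by rw [← Finset.mul_sum]
  -- step 4: the distinct-triple indicator sum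
  have hU : ∑ i : Fin n, ∑ b : Fin n, ∑ c : Fin n,
      (if i = b ∨ i = c ∨ b = c then 0 else -(p i * p b * p c))
      = -(P1^3 - 3*(P1*P2) + 2*P3) := by
    have hdec : ∀ i b c : Fin n,
        (if i = b ∨ i = c ∨ b = c then 0 else -(p i * p b * p c))
        = -(p i * p b * p c) + (if i = b then p i * p b * p c else 0)
          + (if i = c then p i * p b * p c else 0) + (if b = c then p i * p b * p c else 0)
          - (if i = b then (if i = c then 2 * (p i * p b * p c) else 0) else 0) := by
      intro i b c
      exact ite_dec (i = b) (i = c) (b = c) (fun h1 h2 => h1 ▸ h2)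
        (fun h1 h2 => h1 ▸ h2) (fun h1 h2 => h1.trans h2.symm) (p i * p b * p c)
    calc ∑ i : Fin n, ∑ b : Fin n, ∑ c : Fin n,
          (if i = b ∨ i = c ∨ b = c then 0 else -(p i * p b * p c))
        = ∑ i : Fin n, ∑ b : Fin n, ∑ c : Fin n,
          (-(p i * p b * p c) + (if i = b then p i * p b * p c else 0)
            + (if i = c then p i * p b * p c else 0) + (if b = c then p i * p b * p c else 0)
            - (if i = b then (if i = c then 2 * (p i * p b * p c) else 0) else 0)) := by
          exact Finset.sum_congr rfl fun i _ => Finset.sum_congr rfl fun b _ =>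
            Finset.sum_congr rfl fun c _ => hdec i b c
      _ = -(P1^3 - 3*(P1*P2) + 2*P3) := by
          simp only [Finset.sum_add_distrib, Finset.sum_sub_distrib, Finset.sum_neg_distrib]
          rw [hA0, hA1, hA2, hA3, hA4]
          ring
  -- step 5: value of T
  have hTval : 3 * T = -(P1^3 - 3*(P1*P2) + 2*P3) := by
    have : 3 * T = T + T + T := by ring
    rw [this]
    nth_rewrite 2 [hT2]
    nth_rewrite 2 [hT3]
    rw [hT, ← hU]
    rw [← Finset.sum_add_distrib, ← Finset.sum_add_distrib]
    refine Finset.sum_congr rfl fun i _ => ?_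
    rw [← Finset.sum_add_distrib, ← Finset.sum_add_distrib]
    refine Finset.sum_congr rfl fun b _ => ?_
    rw [← Finset.sum_add_distrib, ← Finset.sum_add_distrib]
    exact Finset.sum_congr rfl fun c _ => key i b c
  -- step 6: the q-part cancellation
  set W : Fin n → Fin n → ℝ :=
    fun a b => (1/4) * p b - 1/(4*g) * (p a * p b^2) + (g-1)/(4*g) * (p a * p b) with hWdef
  have hW : ∀ a b : Fin n, W a b + W b a = 0 := by
    intro a b
    simp only [hWdef]
    rcases hp a with ha | ha <;> rcases hp b with hb | hb <;> rw [ha, hb] <;> field_simp <;> ring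
  have hQQ : ∑ a, ∑ b, W a b * Q a b = 0 := by
    have hswap : ∑ a, ∑ b, W a b * Q a b = ∑ a, ∑ b, W b a * Q a b := by
      rw [Finset.sum_comm]
      exact Finset.sum_congr rfl fun a _ => Finset.sum_congr rfl fun b _ => by rw [hQs b a]
    have h2 : (∑ a, ∑ b, W a b * Q a b) + (∑ a, ∑ b, W b a * Q a b) = 0 := by
      rw [← Finset.sum_add_distrib]
      calc ∑ a, ((∑ b, W a b * Q a b) + ∑ b, W b a * Q a b)
          = ∑ _a : Fin n, (0:ℝ) := by
            refine Finset.sum_congr rfl fun a _ => ?_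
            rw [← Finset.sum_add_distrib]
            calc ∑ b, (W a b * Q a b + W b a * Q a b) = ∑ _b : Fin n, (0:ℝ) :=
                Finset.sum_congr rfl fun b _ => by linear_combination Q a b * hW a b
              _ = 0 := Finset.sum_const_zero
        _ = 0 := Finset.sum_const_zero
    linarith
  -- step 7: expansion of the square
  have hsq : ∀ i, (∑ b, p b * C i b)^2 = (∑ b, p b^2 * (Q i b - 1)) + p i^2
      + ∑ b, ∑ c, (if b = c then 0 else p b * p c * (C i b * C i c)) := by
    intro i
    have e1 : (∑ b, p b * C i b)^2 = ∑ b, ∑ c, (p b * C i b) * (p c * C i c) := by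
      rw [sq, Finset.sum_mul_sum]
    have e2 : ∀ b : Fin n, ∑ c, (p b * C i b) * (p c * C i c)
        = (p b * C i b) * (p b * C i b)
          + ∑ c, (if b = c then 0 else (p b * C i b) * (p c * C i c)) :=
      fun b => diag_split (fun b c => (p b * C i b) * (p c * C i c)) b
    have e3 : ∀ b : Fin n, (p b * C i b) * (p b * C i b)
        = p b^2 * (Q i b - 1) + (if b = i then p b^2 else 0) := by
      intro b
      by_cases h : b = i
      · subst h; rw [if_pos rfl, hC0, hQ0]; ring
      · rw [if_neg h]
        have hcb := hCsq i b (fun hh => h hh.symm)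
        linear_combination p b^2 * hcb
    have e4 : ∑ b, (if b = i then p b^2 else 0) = p i^2 := by
      rw [Finset.sum_ite_eq']; simp
    have e5 : ∀ b c : Fin n, (if b = c then (0:ℝ) else (p b * C i b) * (p c * C i c))
        = (if b = c then 0 else p b * p c * (C i b * C i c)) := fun b c => by
      split_ifs <;> ring
    calc (∑ b, p b * C i b)^2
        = ∑ b, ∑ c, (p b * C i b) * (p c * C i c) := e1
      _ = ∑ b, ((p b * C i b) * (p b * C i b)
            + ∑ c, (if b = c then 0 else (p b * C i b) * (p c * C i c))) :=
          Finset.sum_congr rfl fun b _ => e2 b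
      _ = (∑ b, (p b * C i b) * (p b * C i b))
            + ∑ b, ∑ c, (if b = c then 0 else (p b * C i b) * (p c * C i c)) :=
          Finset.sum_add_distrib
      _ = (∑ b, (p b^2 * (Q i b - 1) + (if b = i then p b^2 else 0)))
            + ∑ b, ∑ c, (if b = c then 0 else p b * p c * (C i b * C i c)) := by
          rw [Finset.sum_congr rfl fun b _ => e3 b]
          rw [Finset.sum_congr rfl fun b _ => Finset.sum_congr rfl fun c _ => e5 b c]
      _ = (∑ b, p b^2 * (Q i b - 1)) + p i^2
            + ∑ b, ∑ c, (if b = c then 0 else p b * p c * (C i b * C i c)) := by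
          rw [Finset.sum_add_distrib, e4]
  -- step 8: per-term rewriting
  have hterm : ∀ i, (1/4) * (∑ b, p b * Q i b) - p i / (4*g) * (∑ b, p b * C i b) ^ 2
      = (∑ b, ((1/4) * (p b * Q i b) - 1/(4*g) * (p i * (p b^2 * (Q i b - 1)))))
        - p i^3/(4*g)
        - 1/(4*g) * (p i * ∑ b, ∑ c, (if b = c then 0 else p b * p c * (C i b * C i c))) := by
    intro i
    rw [hsq i]
    have e1 : ∑ b, ((1/4) * (p b * Q i b) - 1/(4*g) * (p i * (p b^2 * (Q i b - 1))))
        = (1/4) * (∑ b, p b * Q i b) - 1/(4*g) * (p i * ∑ b, p b^2 * (Q i b - 1)) := by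
      rw [Finset.sum_sub_distrib, ← Finset.mul_sum, ← Finset.mul_sum, ← Finset.mul_sum]
    rw [e1]
    ring
  -- step 9: remaining counting
  have hPP2 : ∑ i : Fin n, ∑ b : Fin n, p i * p b ^ 2 = P1 * P2 := by
    have h1 : ∀ i : Fin n, ∑ b, p i * p b ^ 2 = p i * P2 := fun i => by rw [← Finset.mul_sum]
    rw [Finset.sum_congr rfl fun i _ => h1 i, ← Finset.sum_mul]
  have hpT : ∑ i, p i * (∑ b, ∑ c, (if b = c then 0 else p b * p c * (C i b * C i c))) = T := by
    rw [hT]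
    refine Finset.sum_congr rfl fun i _ => ?_
    rw [Finset.mul_sum]
    refine Finset.sum_congr rfl fun b _ => ?_
    rw [Finset.mul_sum]
    refine Finset.sum_congr rfl fun c _ => ?_
    split_ifs <;> ring
  have split2 : ∀ (F G : Fin n → Fin n → ℝ),
      ∑ a, ∑ b, (F a b + G a b) = (∑ a, ∑ b, F a b) + ∑ a, ∑ b, G a b := fun F G => by
    rw [← Finset.sum_add_distrib]
    exact Finset.sum_congr rfl fun a _ => Finset.sum_add_distrib
  -- step 10: global sums
  have E1 : ∑ i, ((1/4) * (∑ b, p b * Q i b) - p i / (4*g) * (∑ b, p b * C i b) ^ 2)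
      = (∑ i, ∑ b, ((1/4) * (p b * Q i b) - 1/(4*g) * (p i * (p b^2 * (Q i b - 1)))))
        - P3/(4*g)
        - 1/(4*g) * (∑ i, p i * ∑ b, ∑ c, (if b = c then 0 else p b * p c * (C i b * C i c))) := by
    rw [Finset.sum_congr rfl fun i _ => hterm i]
    rw [Finset.sum_sub_distrib, Finset.sum_sub_distrib, ← Finset.sum_div, ← Finset.mul_sum, ← hP3]
  have E2 : (∑ i, ∑ b, ((1/4) * (p b * Q i b) - 1/(4*g) * (p i * (p b^2 * (Q i b - 1)))))
        + (∑ a, ∑ b, (g-1)/(4*g) * (p a * p b) * Q a b)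
      = (∑ a, ∑ b, W a b * Q a b) + 1/(4*g) * (P1 * P2) := by
    rw [← split2]
    calc ∑ a, ∑ b, (((1/4) * (p b * Q a b) - 1/(4*g) * (p a * (p b^2 * (Q a b - 1))))
            + (g-1)/(4*g) * (p a * p b) * Q a b)
        = ∑ a, ∑ b, (W a b * Q a b + 1/(4*g) * (p a * p b^2)) :=
          Finset.sum_congr rfl fun a _ => Finset.sum_congr rfl fun b _ => by
            simp only [hWdef]; ring
      _ = (∑ a, ∑ b, W a b * Q a b) + ∑ a, ∑ b, 1/(4*g) * (p a * p b^2) := split2 _ _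
      _ = (∑ a, ∑ b, W a b * Q a b) + 1/(4*g) * (P1 * P2) := by
          have : ∑ a : Fin n, ∑ b : Fin n, 1/(4*g) * (p a * p b^2)
              = 1/(4*g) * ∑ a : Fin n, ∑ b : Fin n, p a * p b^2 := by
            rw [Finset.mul_sum]
            exact Finset.sum_congr rfl fun a _ => by rw [← Finset.mul_sum]
          rw [this, hPP2]
  linear_combination E1 + E2 + hQQ + (-1/(4*g)) * hpT + (-1/(12*g)) * hTval

end Alg

-- ===== original statement =====

/-- Partial derivative in the `j`-th coordinate of a function `(Fin n → ℝ) → ℂ`. -/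
noncomputable def pd {n : ℕ} (j : Fin n) (f : (Fin n → ℝ) → ℂ) : (Fin n → ℝ) → ℂ :=
  fun x => deriv (fun t : ℝ => f (Function.update x j t)) (x j)

/-- The deformed Calogero–Sutherland operator `H_{N,M}(x,y;g)`, acting on functions of
`(x_1,…,x_N,y_1,…,y_M)` encoded as `u : Fin (N+M) → ℝ` with `x_j = u (Fin.castAdd M j)`
and `y_k = u (Fin.natAdd N k)`. -/
noncomputable def HNM (N M : ℕ) (g : ℝ) (f : (Fin (N + M) → ℝ) → ℂ) :
    (Fin (N + M) → ℝ) → ℂ := fun u =>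
  -(∑ j : Fin N, pd (Fin.castAdd M j) (pd (Fin.castAdd M j) f) u)
    + (g : ℂ) * ∑ k : Fin M, pd (Fin.natAdd N k) (pd (Fin.natAdd N k) f) u
    + (((∑ j : Fin N, ∑ j' : Fin N, if j < j' then
            g * (g - 1) / (2 * Real.sin ((u (Fin.castAdd M j) - u (Fin.castAdd M j')) / 2) ^ 2)
          else 0)
        + (∑ k : Fin M, ∑ k' : Fin M, if k < k' then
            ((g - 1) / g) / (2 * Real.sin ((u (Fin.natAdd N k) - u (Fin.natAdd N k')) / 2) ^ 2)
          else 0)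
        + ∑ j : Fin N, ∑ k : Fin M,
            (1 - g) / (2 * Real.sin ((u (Fin.castAdd M j) - u (Fin.natAdd N k)) / 2) ^ 2) : ℝ) : ℂ)
      * f u

/-- The dCS ground state `Ψ₀(x,y;g)` (with real powers). -/
noncomputable def Psi0 (N M : ℕ) (g : ℝ) (u : Fin (N + M) → ℝ) : ℝ :=
  ((∏ j : Fin N, ∏ j' : Fin N, if j < j' then
      Real.sin ((u (Fin.castAdd M j) - u (Fin.castAdd M j')) / 2) else 1) ^ g)
    * ((∏ k : Fin M, ∏ k' : Fin M, if k < k' then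
        Real.sin ((u (Fin.natAdd N k) - u (Fin.natAdd N k')) / 2) else 1) ^ (1 / g))
    / ∏ j : Fin N, ∏ k : Fin M, Real.sin ((u (Fin.castAdd M j) - u (Fin.natAdd N k)) / 2)

/-- The open region `U = {π > x_1 > ⋯ > x_N > y_1 > ⋯ > y_M > −π}`. -/
def regionU (N M : ℕ) : Set (Fin (N + M) → ℝ) :=
  {u | (∀ i, u i ∈ Set.Ioo (-Real.pi) Real.pi) ∧ StrictAnti u}


-- ===== lemmas about the region and the ground state =====

lemma regionU_sin_pos {N M : ℕ} {v : Fin (N + M) → ℝ} (hv : v ∈ regionU N M)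
    {a b : Fin (N + M)} (h : a < b) : 0 < Real.sin ((v a - v b) / 2) := by
  obtain ⟨hIoo, hA⟩ := hv
  have h1 := (hIoo a).2
  have h2 := (hIoo b).1
  have h3 : v b < v a := hA h
  apply Real.sin_pos_of_pos_of_lt_pi
  · linarith
  · linarith

lemma regionU_sin_ne {N M : ℕ} {v : Fin (N + M) → ℝ} (hv : v ∈ regionU N M)
    {a b : Fin (N + M)} (h : a ≠ b) : Real.sin ((v a - v b) / 2) ≠ 0 := by
  rcases lt_or_gt_of_ne h with hlt | hgt
  · exact ne_of_gt (regionU_sin_pos hv hlt)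
  · rw [show ((v a - v b) / 2) = -((v b - v a) / 2) by ring, Real.sin_neg]
    exact neg_ne_zero.2 (ne_of_gt (regionU_sin_pos hv hgt))

lemma isOpen_regionU (N M : ℕ) : IsOpen (regionU N M) := by
  have hset : regionU N M =
      (⋂ i : Fin (N + M), ({v : Fin (N + M) → ℝ | -Real.pi < v i} ∩ {v | v i < Real.pi})) ∩
      ⋂ q : Fin (N + M) × Fin (N + M), {v : Fin (N + M) → ℝ | q.1 < q.2 → v q.2 < v q.1} := by
    ext v
    simp only [regionU, Set.mem_setOf_eq, Set.mem_inter_iff, Set.mem_iInter, Set.mem_Ioo]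
    constructor
    · rintro ⟨h1, h2⟩
      exact ⟨fun i => ⟨(h1 i).1, (h1 i).2⟩, fun q hq => h2 hq⟩
    · rintro ⟨h1, h2⟩
      exact ⟨fun i => ⟨(h1 i).1, (h1 i).2⟩, fun a b hab => h2 (a, b) hab⟩
  rw [hset]
  apply IsOpen.inter
  · exact isOpen_iInter_of_finite fun i =>
      (isOpen_lt continuous_const (continuous_apply i)).inter
        (isOpen_lt (continuous_apply i) continuous_const)
  · refine isOpen_iInter_of_finite fun q => ?_
    by_cases hq : q.1 < q.2
    · have : {v : Fin (N + M) → ℝ | q.1 < q.2 → v q.2 < v q.1} = {v | v q.2 < v q.1} := by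
        ext v; simp [hq]
      rw [this]
      exact isOpen_lt (continuous_apply q.2) (continuous_apply q.1)
    · have : {v : Fin (N + M) → ℝ | q.1 < q.2 → v q.2 < v q.1} = Set.univ := by
        ext v; simp [hq]
      rw [this]
      exact isOpen_univ

lemma log_sin_symm (x y : ℝ) :
    Real.log (Real.sin ((y - x) / 2)) = Real.log (Real.sin ((x - y) / 2)) := by
  rw [show (y - x) / 2 = -((x - y) / 2) by ring, Real.sin_neg, Real.log_neg_eq_log]

lemma pull_const {n m : ℕ} (c : ℝ) (F : Fin n → Fin m → ℝ) :
    ∑ a, ∑ b, c * F a b = c * ∑ a, ∑ b, F a b := by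
  rw [Finset.mul_sum]
  exact Finset.sum_congr rfl fun a _ => by rw [Finset.mul_sum]

/-- On the region `U`, the ground state equals the exponential of a log-sum. -/
lemma Psi0_eq_exp (N M : ℕ) (g : ℝ) (hg : 0 < g) (v : Fin (N + M) → ℝ)
    (hv : v ∈ regionU N M) :
    Psi0 N M g v = Real.exp ((1/(2*g)) * ∑ a, ∑ b, (if a = b then 0 else
      pfun N g a * pfun N g b * Real.log (Real.sin ((v a - v b) / 2)))) := by
  rw [Psi0]
  set A := ∏ j : Fin N, ∏ j' : Fin N, (if j < j' then
      Real.sin ((v (Fin.castAdd M j) - v (Fin.castAdd M j')) / 2) else 1) with hA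
  set B := ∏ k : Fin M, ∏ k' : Fin M, (if k < k' then
      Real.sin ((v (Fin.natAdd N k) - v (Fin.natAdd N k')) / 2) else 1) with hB
  set Cc := ∏ j : Fin N, ∏ k : Fin M,
      Real.sin ((v (Fin.castAdd M j) - v (Fin.natAdd N k)) / 2) with hC
  have hApos : 0 < A := Finset.prod_pos fun j _ => Finset.prod_pos fun j' _ => by
    by_cases h : j < j'
    · rw [if_pos h]; exact regionU_sin_pos hv ((castAdd_lt_castAdd j j').2 h)
    · rw [if_neg h]; norm_num
  have hBpos : 0 < B := Finset.prod_pos fun k _ => Finset.prod_pos fun k' _ => by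
    by_cases h : k < k'
    · rw [if_pos h]; exact regionU_sin_pos hv ((natAdd_lt_natAdd k k').2 h)
    · rw [if_neg h]; norm_num
  have hCpos : 0 < Cc := Finset.prod_pos fun j _ => Finset.prod_pos fun k _ =>
    regionU_sin_pos hv (castAdd_lt_natAdd j k)
  have hPsipos : 0 < A ^ g * B ^ (1/g) / Cc :=
    div_pos (mul_pos (Real.rpow_pos_of_pos hApos g) (Real.rpow_pos_of_pos hBpos _)) hCpos
  rw [show A ^ g * B ^ (1/g) / Cc = Real.exp (Real.log (A ^ g * B ^ (1/g) / Cc)) from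
    (Real.exp_log hPsipos).symm]
  congr 1
  rw [Real.log_div (ne_of_gt (mul_pos (Real.rpow_pos_of_pos hApos g)
      (Real.rpow_pos_of_pos hBpos _))) (ne_of_gt hCpos),
    Real.log_mul (ne_of_gt (Real.rpow_pos_of_pos hApos g))
      (ne_of_gt (Real.rpow_pos_of_pos hBpos _)),
    Real.log_rpow hApos, Real.log_rpow hBpos]
  -- compute the log of the three products
  have hlogA : Real.log A = ∑ j : Fin N, ∑ j' : Fin N, (if j < j' then
      Real.log (Real.sin ((v (Fin.castAdd M j) - v (Fin.castAdd M j')) / 2)) else 0) := by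
    rw [hA, Real.log_prod (fun j _ => ne_of_gt (Finset.prod_pos fun j' _ => by
      by_cases h : j < j'
      · rw [if_pos h]; exact regionU_sin_pos hv ((castAdd_lt_castAdd j j').2 h)
      · rw [if_neg h]; norm_num))]
    refine Finset.sum_congr rfl fun j _ => ?_
    rw [Real.log_prod (fun j' _ => by
      by_cases h : j < j'
      · rw [if_pos h]; exact ne_of_gt (regionU_sin_pos hv ((castAdd_lt_castAdd j j').2 h))
      · rw [if_neg h]; norm_num)]
    refine Finset.sum_congr rfl fun j' _ => ?_
    by_cases h : j < j' <;> simp [h]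
  have hlogB : Real.log B = ∑ k : Fin M, ∑ k' : Fin M, (if k < k' then
      Real.log (Real.sin ((v (Fin.natAdd N k) - v (Fin.natAdd N k')) / 2)) else 0) := by
    rw [hB, Real.log_prod (fun k _ => ne_of_gt (Finset.prod_pos fun k' _ => by
      by_cases h : k < k'
      · rw [if_pos h]; exact regionU_sin_pos hv ((natAdd_lt_natAdd k k').2 h)
      · rw [if_neg h]; norm_num))]
    refine Finset.sum_congr rfl fun k _ => ?_
    rw [Real.log_prod (fun k' _ => by
      by_cases h : k < k'
      · rw [if_pos h]; exact ne_of_gt (regionU_sin_pos hv ((natAdd_lt_natAdd k k').2 h))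
      · rw [if_neg h]; norm_num)]
    refine Finset.sum_congr rfl fun k' _ => ?_
    by_cases h : k < k' <;> simp [h]
  have hlogC : Real.log Cc = ∑ j : Fin N, ∑ k : Fin M,
      Real.log (Real.sin ((v (Fin.castAdd M j) - v (Fin.natAdd N k)) / 2)) := by
    rw [hC, Real.log_prod (fun j _ => ne_of_gt (Finset.prod_pos fun k _ =>
      regionU_sin_pos hv (castAdd_lt_natAdd j k)))]
    refine Finset.sum_congr rfl fun j _ => ?_
    rw [Real.log_prod (fun k _ =>
      ne_of_gt (regionU_sin_pos hv (castAdd_lt_natAdd j k)))]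
  -- symmetrize and split the double sum
  have hF : ∀ a b : Fin (N + M),
      pfun N g a * pfun N g b * Real.log (Real.sin ((v a - v b) / 2))
      = pfun N g b * pfun N g a * Real.log (Real.sin ((v b - v a) / 2)) := by
    intro a b
    rw [log_sin_symm (v a) (v b)]
    ring
  rw [sym_pair_sum _ hF, pair_sum_blocks N M
    (fun a b => pfun N g a * pfun N g b * Real.log (Real.sin ((v a - v b) / 2)))]
  have b1 : ∑ j : Fin N, ∑ j' : Fin N, (if j < j' then
        pfun N g (Fin.castAdd M j) * pfun N g (Fin.castAdd M j')
          * Real.log (Real.sin ((v (Fin.castAdd M j) - v (Fin.castAdd M j')) / 2)) else 0)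
      = (g * g) * ∑ j : Fin N, ∑ j' : Fin N, (if j < j' then
          Real.log (Real.sin ((v (Fin.castAdd M j) - v (Fin.castAdd M j')) / 2)) else 0) := by
    rw [← pull_const]
    refine Finset.sum_congr rfl fun j _ => Finset.sum_congr rfl fun j' _ => ?_
    rw [pfun_castAdd, pfun_castAdd]
    split_ifs <;> ring
  have b2 : ∑ k : Fin M, ∑ k' : Fin M, (if k < k' then
        pfun N g (Fin.natAdd N k) * pfun N g (Fin.natAdd N k')
          * Real.log (Real.sin ((v (Fin.natAdd N k) - v (Fin.natAdd N k')) / 2)) else 0)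
      = ∑ k : Fin M, ∑ k' : Fin M, (if k < k' then
          Real.log (Real.sin ((v (Fin.natAdd N k) - v (Fin.natAdd N k')) / 2)) else 0) := by
    refine Finset.sum_congr rfl fun k _ => Finset.sum_congr rfl fun k' _ => ?_
    rw [pfun_natAdd, pfun_natAdd]
    split_ifs <;> ring
  have b3 : ∑ j : Fin N, ∑ k : Fin M,
        pfun N g (Fin.castAdd M j) * pfun N g (Fin.natAdd N k)
          * Real.log (Real.sin ((v (Fin.castAdd M j) - v (Fin.natAdd N k)) / 2))
      = (-g) * ∑ j : Fin N, ∑ k : Fin M,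
          Real.log (Real.sin ((v (Fin.castAdd M j) - v (Fin.natAdd N k)) / 2)) := by
    rw [← pull_const]
    refine Finset.sum_congr rfl fun j _ => Finset.sum_congr rfl fun k _ => ?_
    rw [pfun_castAdd, pfun_natAdd]
    ring
  rw [b1, b2, b3, hlogA, hlogB, hlogC]
  have hgne : g ≠ 0 := ne_of_gt hg
  field_simp
  ring


-- ===== the one-dimensional reduction =====

lemma hasDerivAt_sumlog {n : ℕ} (i : Fin n) (q c : Fin n → ℝ) (t : ℝ)
    (h : ∀ b, b ≠ i → Real.sin ((t - c b) / 2) ≠ 0) :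
    HasDerivAt (fun s => ∑ b, if b = i then 0 else q b * Real.log (Real.sin ((s - c b) / 2)))
      (∑ b, if b = i then 0 else q b * (ctg ((t - c b) / 2) / 2)) t := by
  apply HasDerivAt.fun_sum
  intro b _
  by_cases hb : b = i
  · simp only [hb, if_pos rfl]
    exact hasDerivAt_const t 0
  · simp only [if_neg hb]
    exact (hasDerivAt_logsin (c b) t (h b hb)).const_mul (q b)

lemma hasDerivAt_sumctg {n : ℕ} (i : Fin n) (q c : Fin n → ℝ) (t : ℝ)
    (h : ∀ b, b ≠ i → Real.sin ((t - c b) / 2) ≠ 0) :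
    HasDerivAt (fun s => ∑ b, if b = i then 0 else q b * ctg ((s - c b) / 2))
      (∑ b, if b = i then 0 else q b * (-(1 / (2 * Real.sin ((t - c b) / 2) ^ 2)))) t := by
  apply HasDerivAt.fun_sum
  intro b _
  by_cases hb : b = i
  · simp only [hb, if_pos rfl]
    exact hasDerivAt_const t 0
  · simp only [if_neg hb]
    exact (hasDerivAt_ctg (c b) t (h b hb)).const_mul (q b)

/-- Decomposition of the log-sum along the `i`-th coordinate line. -/
lemma phi_update (N M : ℕ) (g : ℝ) (u : Fin (N + M) → ℝ) (i : Fin (N + M)) (t : ℝ) :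
    (1/(2*g)) * ∑ a, ∑ b, (if a = b then 0 else
      pfun N g a * pfun N g b *
        Real.log (Real.sin ((Function.update u i t a - Function.update u i t b) / 2)))
    = (pfun N g i / g) * (∑ b, if b = i then 0 else
        pfun N g b * Real.log (Real.sin ((t - u b) / 2)))
      + (1/(2*g)) * ∑ a, ∑ b, (if a = i ∨ b = i ∨ a = b then 0 else
          pfun N g a * pfun N g b * Real.log (Real.sin ((u a - u b) / 2))) := by
  have key : ∀ a b : Fin (N + M), (if a = b then (0:ℝ) else
      pfun N g a * pfun N g b *
        Real.log (Real.sin ((Function.update u i t a - Function.update u i t b) / 2)))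
      = (if a = i ∨ b = i ∨ a = b then 0 else
          pfun N g a * pfun N g b * Real.log (Real.sin ((u a - u b) / 2)))
        + (if a = i then (if b = i then 0 else
            pfun N g i * pfun N g b * Real.log (Real.sin ((t - u b) / 2))) else 0)
        + (if b = i then (if a = i then 0 else
            pfun N g i * pfun N g a * Real.log (Real.sin ((t - u a) / 2))) else 0) := by
    intro a b
    by_cases ha : a = i <;> by_cases hb : b = i
    · subst ha; subst hb; simp
    · subst ha
      rw [if_neg (fun h => hb h.symm), if_pos (Or.inl rfl), if_pos rfl, if_neg hb,
        if_neg hb, Function.update_self, Function.update_of_ne hb]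
      ring
    · subst hb
      rw [if_neg ha, if_pos (Or.inr (Or.inl rfl)), if_neg ha, if_pos rfl, if_neg ha,
        Function.update_self, Function.update_of_ne ha, log_sin_symm t (u a)]
      ring
    · rw [if_neg ha, if_neg hb, Function.update_of_ne ha, Function.update_of_ne hb]
      by_cases hab : a = b
      · rw [if_pos hab, if_pos (Or.inr (Or.inr hab))]; ring
      · rw [if_neg hab, if_neg (by tauto : ¬(a = i ∨ b = i ∨ a = b))]; ring
  rw [Finset.sum_congr rfl fun a _ => Finset.sum_congr rfl fun b _ => key a b]
  have e1 : ∀ a : Fin (N + M), ∑ b : Fin (N + M),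
      ((if a = i ∨ b = i ∨ a = b then (0:ℝ) else
          pfun N g a * pfun N g b * Real.log (Real.sin ((u a - u b) / 2)))
        + (if a = i then (if b = i then 0 else
            pfun N g i * pfun N g b * Real.log (Real.sin ((t - u b) / 2))) else 0)
        + (if b = i then (if a = i then 0 else
            pfun N g i * pfun N g a * Real.log (Real.sin ((t - u a) / 2))) else 0))
      = (∑ b, (if a = i ∨ b = i ∨ a = b then (0:ℝ) else
          pfun N g a * pfun N g b * Real.log (Real.sin ((u a - u b) / 2))))
        + (if a = i then (∑ b, if b = i then 0 else
            pfun N g i * pfun N g b * Real.log (Real.sin ((t - u b) / 2))) else 0)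
        + (if a = i then 0 else
            pfun N g i * pfun N g a * Real.log (Real.sin ((t - u a) / 2))) := by
    intro a
    rw [Finset.sum_add_distrib, Finset.sum_add_distrib]
    congr 1
    · congr 1
      by_cases ha : a = i <;> simp [ha]
    · rw [Finset.sum_ite_eq']
      simp
  rw [Finset.sum_congr rfl fun a _ => e1 a, Finset.sum_add_distrib, Finset.sum_add_distrib]
  rw [Finset.sum_ite_eq']
  simp only [Finset.mem_univ, if_true]
  have e2 : ∑ a : Fin (N + M), (if a = i then (0:ℝ) else
      pfun N g i * pfun N g a * Real.log (Real.sin ((t - u a) / 2)))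
      = ∑ b : Fin (N + M), (if b = i then (0:ℝ) else
          pfun N g i * pfun N g b * Real.log (Real.sin ((t - u b) / 2))) := rfl
  rw [e2]
  have e3 : ∑ b : Fin (N + M), (if b = i then (0:ℝ) else
      pfun N g i * pfun N g b * Real.log (Real.sin ((t - u b) / 2)))
      = pfun N g i * ∑ b : Fin (N + M), (if b = i then (0:ℝ) else
          pfun N g b * Real.log (Real.sin ((t - u b) / 2))) := by
    rw [Finset.mul_sum]
    refine Finset.sum_congr rfl fun b _ => ?_
    split_ifs <;> ring
  rw [e3]
  ring



lemma ctg_triple3 (xa xb xc : ℝ) (h1 : Real.sin ((xa - xb) / 2) ≠ 0)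
    (h2 : Real.sin ((xa - xc) / 2) ≠ 0) (h3 : Real.sin ((xb - xc) / 2) ≠ 0) :
    ctg ((xa - xb) / 2) * ctg ((xa - xc) / 2) + ctg ((xb - xa) / 2) * ctg ((xb - xc) / 2)
      + ctg ((xc - xa) / 2) * ctg ((xc - xb) / 2) = -1 := by
  have e4 : (xa - xc) / 2 = (xa - xb) / 2 + (xb - xc) / 2 := by ring
  rw [show (xb - xa) / 2 = -((xa - xb) / 2) by ring,
    show (xc - xa) / 2 = -((xa - xc) / 2) by ring,
    show (xc - xb) / 2 = -((xb - xc) / 2) by ring, ctg_neg, ctg_neg, ctg_neg]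
  have h := ctg_triple ((xa - xb) / 2) ((xb - xc) / 2) h1 h3 (by rw [← e4]; exact h2)
  rw [e4]
  linear_combination h

/-- The second `pd`-derivative of the ground state at a point of `U`. -/
lemma pd2_eq (N M : ℕ) (g : ℝ) (hg : 0 < g) (u : Fin (N + M) → ℝ)
    (hu : u ∈ regionU N M) (i : Fin (N + M)) :
    pd i (pd i (fun v => (Psi0 N M g v : ℂ))) u
    = ((-(pfun N g i / (4*g)) * (∑ b, if b = i then 0 else
          pfun N g b * (1 / Real.sin ((u i - u b) / 2) ^ 2))
        + (pfun N g i / (2*g) * ∑ b, (if b = i then 0 else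
            pfun N g b * ctg ((u i - u b) / 2))) ^ 2 : ℝ) : ℂ)
      * ((Psi0 N M g u : ℝ) : ℂ) := by
  set f : (Fin (N + M) → ℝ) → ℂ := fun v => (Psi0 N M g v : ℂ) with hf
  set p : Fin (N + M) → ℝ := pfun N g with hp
  set K : ℝ := (1/(2*g)) * ∑ a, ∑ b, (if a = i ∨ b = i ∨ a = b then 0 else
      p a * p b * Real.log (Real.sin ((u a - u b) / 2))) with hK
  set G : ℝ → ℝ := fun t => (p i / g) * (∑ b, if b = i then 0 else
      p b * Real.log (Real.sin ((t - u b) / 2))) + K with hG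
  set A : ℝ → ℝ := fun t => p i / (2*g) * ∑ b, (if b = i then 0 else
      p b * ctg ((t - u b) / 2)) with hA
  set B : ℝ → ℝ := fun t => -(p i / (4*g)) * ∑ b, (if b = i then 0 else
      p b * (1 / Real.sin ((t - u b) / 2) ^ 2)) with hB
  have hmem : ∀ᶠ t in nhds (u i), Function.update u i t ∈ regionU N M := by
    have hc : ContinuousAt (fun t : ℝ => Function.update u i t) (u i) :=
      (continuous_const.update i continuous_id).continuousAt
    have hmem0 : regionU N M ∈ nhds (Function.update u i (u i)) := by
      rw [Function.update_eq_self]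
      exact (isOpen_regionU N M).mem_nhds hu
    exact hc.preimage_mem_nhds hmem0
  have hsin : ∀ᶠ t in nhds (u i), ∀ b, b ≠ i → Real.sin ((t - u b) / 2) ≠ 0 := by
    filter_upwards [hmem] with t ht
    intro b hb
    have h2 := regionU_sin_ne ht (a := i) (b := b) (fun h => hb h.symm)
    rwa [Function.update_self, Function.update_of_ne hb] at h2
  have hWeq : ∀ᶠ t in nhds (u i), Psi0 N M g (Function.update u i t) = Real.exp (G t) := by
    filter_upwards [hmem] with t ht
    rw [Psi0_eq_exp N M g hg _ ht]
    congr 1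
    rw [hG, hp, hK]
    exact phi_update N M g u i t
  have hGA : ∀ᶠ t in nhds (u i), HasDerivAt G (A t) t := by
    filter_upwards [hsin] with t ht
    have h1 := ((hasDerivAt_sumlog i p u t ht).const_mul (p i / g)).add_const K
    have h2 : (p i / g) * (∑ b, if b = i then 0 else p b * (ctg ((t - u b) / 2) / 2))
        = A t := by
      rw [hA]
      simp only
      rw [Finset.mul_sum, Finset.mul_sum]
      exact Finset.sum_congr rfl fun b _ => by split_ifs <;> ring
    rw [hG]
    exact h2 ▸ h1
  have hAB : ∀ᶠ t in nhds (u i), HasDerivAt A (B t) t := by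
    filter_upwards [hsin] with t ht
    have h1 := (hasDerivAt_sumctg i p u t ht).const_mul (p i / (2*g))
    have h2 : (p i / (2*g)) * (∑ b, if b = i then 0 else
        p b * (-(1 / (2 * Real.sin ((t - u b) / 2) ^ 2)))) = B t := by
      rw [hB]
      simp only
      rw [Finset.mul_sum, Finset.mul_sum]
      exact Finset.sum_congr rfl fun b _ => by split_ifs <;> ring
    rw [hA]
    exact h2 ▸ h1
  have hpd1 : ∀ᶠ t in nhds (u i), pd i f (Function.update u i t)
      = ((A t * Real.exp (G t) : ℝ) : ℂ) := by
    filter_upwards [hWeq.eventually_nhds, hGA, hsin] with t hWt hGt _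
    rw [show pd i f (Function.update u i t)
        = deriv (fun s => f (Function.update (Function.update u i t) i s))
            ((Function.update u i t) i) from rfl]
    have e0 : (fun s => f (Function.update (Function.update u i t) i s))
        = fun s => f (Function.update u i s) := by
      funext s
      rw [Function.update_idem]
    rw [e0, Function.update_self]
    have heq : (fun s => f (Function.update u i s)) =ᶠ[nhds t]
        (fun s => ((Real.exp (G s) : ℝ) : ℂ)) := by
      filter_upwards [hWt] with s hs
      rw [hf]
      simp only
      rw [hs]
    rw [heq.deriv_eq]
    have hder : HasDerivAt (fun s => ((Real.exp (G s) : ℝ) : ℂ))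
        ((A t * Real.exp (G t) : ℝ) : ℂ) t := by
      have h := hGt.exp.ofReal_comp
      convert h using 1
      push_cast
      ring
    exact hder.deriv
  rw [show pd i (pd i f) u = deriv (fun t => pd i f (Function.update u i t)) (u i) from rfl]
  have heq2 : (fun t => pd i f (Function.update u i t)) =ᶠ[nhds (u i)]
      (fun t => ((A t * Real.exp (G t) : ℝ) : ℂ)) := hpd1
  rw [heq2.deriv_eq]
  have hGA0 : HasDerivAt G (A (u i)) (u i) := hGA.self_of_nhds
  have hAB0 : HasDerivAt A (B (u i)) (u i) := hAB.self_of_nhds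
  have hder2 : HasDerivAt (fun t => ((A t * Real.exp (G t) : ℝ) : ℂ))
      (((B (u i) * Real.exp (G (u i)) + A (u i) * (Real.exp (G (u i)) * A (u i))) : ℝ) : ℂ)
      (u i) := (hAB0.mul hGA0.exp).ofReal_comp
  rw [hder2.deriv]
  have hGu : Real.exp (G (u i)) = Psi0 N M g u := by
    have h := hWeq.self_of_nhds
    rw [Function.update_eq_self] at h
    exact h.symm
  rw [hGu, ← Complex.ofReal_mul]
  congr 1
  simp only [hA, hB]
  ring

/-- On `U`, the dCS ground state `Ψ₀` is a pointwise eigenfunction of the deformed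
Calogero–Sutherland operator with eigenvalue `E₀ = (g²/12)·[(N − M/g)³ − (N − M/g³)]`. -/
theorem groundstate_eigenfunction (N M : ℕ) (g : ℝ) (hg : 0 < g)
    (u : Fin (N + M) → ℝ) (hu : u ∈ regionU N M) :
    HNM N M g (fun v => (Psi0 N M g v : ℂ)) u
      = ((g ^ 2 / 12 * (((N : ℝ) - M / g) ^ 3 - ((N : ℝ) - M / g ^ 3)) : ℝ) : ℂ)
          * (Psi0 N M g u : ℂ) := by
  have hgne : g ≠ 0 := ne_of_gt hg
  -- abbreviations
  set Y : Fin (N + M) → ℝ := fun i =>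
    -(pfun N g i / (4*g)) * (∑ b, if b = i then 0 else
        pfun N g b * (1 / Real.sin ((u i - u b) / 2) ^ 2))
      + (pfun N g i / (2*g) * ∑ b, (if b = i then 0 else
          pfun N g b * ctg ((u i - u b) / 2))) ^ 2 with hY
  have key : ∀ i, pd i (pd i (fun v => (Psi0 N M g v : ℂ))) u
      = ((Y i : ℝ) : ℂ) * ((Psi0 N M g u : ℝ) : ℂ) := by
    intro i
    rw [pd2_eq N M g hg u hu i]
  -- guard removal in `Y`
  have hQg : ∀ i : Fin (N + M), (∑ b, if b = i then 0 else
      pfun N g b * (1 / Real.sin ((u i - u b) / 2) ^ 2))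
      = ∑ b, pfun N g b * (1 / Real.sin ((u i - u b) / 2) ^ 2) := by
    intro i
    refine Finset.sum_congr rfl fun b _ => ?_
    by_cases h : b = i
    · subst h; simp
    · rw [if_neg h]
  have hCg : ∀ i : Fin (N + M), (∑ b, if b = i then 0 else
      pfun N g b * ctg ((u i - u b) / 2)) = ∑ b, pfun N g b * ctg ((u i - u b) / 2) := by
    intro i
    refine Finset.sum_congr rfl fun b _ => ?_
    by_cases h : b = i
    · subst h; simp [sub_self, ctg_zero]
    · rw [if_neg h]
  have hsigY : ∀ i : Fin (N + M), (if (i : ℕ) < N then (-1:ℝ) else g) * Y i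
      = (1/4) * (∑ b, pfun N g b * (1 / Real.sin ((u i - u b) / 2) ^ 2))
        - pfun N g i / (4*g) * (∑ b, pfun N g b * ctg ((u i - u b) / 2)) ^ 2 := by
    intro i
    rw [hY]
    simp only
    rw [hQg i, hCg i]
    by_cases hi : (i : ℕ) < N
    · rw [if_pos hi, show pfun N g i = g by simp [pfun, hi]]
      field_simp
      ring
    · rw [if_neg hi, show pfun N g i = -1 by simp [pfun, hi]]
      field_simp
      ring
  -- the potential
  have hVpot : (∑ j : Fin N, ∑ j' : Fin N, if j < j' then
        g * (g - 1) / (2 * Real.sin ((u (Fin.castAdd M j) - u (Fin.castAdd M j')) / 2) ^ 2)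
      else 0)
      + (∑ k : Fin M, ∑ k' : Fin M, if k < k' then
          ((g - 1) / g) / (2 * Real.sin ((u (Fin.natAdd N k) - u (Fin.natAdd N k')) / 2) ^ 2)
        else 0)
      + ∑ j : Fin N, ∑ k : Fin M,
          (1 - g) / (2 * Real.sin ((u (Fin.castAdd M j) - u (Fin.natAdd N k)) / 2) ^ 2)
      = ∑ a, ∑ b, (g-1)/(4*g) * (pfun N g a * pfun N g b)
          * (1 / Real.sin ((u a - u b) / 2) ^ 2) := by
    have hF : ∀ a b : Fin (N + M),
        (g-1)/(2*g) * (pfun N g a * pfun N g b) * (1 / Real.sin ((u a - u b) / 2) ^ 2)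
        = (g-1)/(2*g) * (pfun N g b * pfun N g a) * (1 / Real.sin ((u b - u a) / 2) ^ 2) := by
      intro a b
      rw [show (u b - u a) / 2 = -((u a - u b) / 2) by ring, Real.sin_neg, neg_sq]
      ring
    have hblocks := pair_sum_blocks N M (fun a b =>
      (g-1)/(2*g) * (pfun N g a * pfun N g b) * (1 / Real.sin ((u a - u b) / 2) ^ 2))
    have hsym := sym_pair_sum (fun a b =>
      (g-1)/(2*g) * (pfun N g a * pfun N g b) * (1 / Real.sin ((u a - u b) / 2) ^ 2)) hF
    -- block computations
    have b1 : ∑ j : Fin N, ∑ j' : Fin N, (if j < j' then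
        g * (g - 1) / (2 * Real.sin ((u (Fin.castAdd M j) - u (Fin.castAdd M j')) / 2) ^ 2)
        else 0)
        = ∑ j : Fin N, ∑ j' : Fin N, (if j < j' then
            (g-1)/(2*g) * (pfun N g (Fin.castAdd M j) * pfun N g (Fin.castAdd M j'))
              * (1 / Real.sin ((u (Fin.castAdd M j) - u (Fin.castAdd M j')) / 2) ^ 2) else 0) := by
      refine Finset.sum_congr rfl fun j _ => Finset.sum_congr rfl fun j' _ => ?_
      split_ifs with h
      · rw [pfun_castAdd, pfun_castAdd]
        have hne := regionU_sin_ne hu (a := Fin.castAdd M j) (b := Fin.castAdd M j')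
          (ne_of_lt ((castAdd_lt_castAdd j j').2 h))
        field_simp [hne]
      · rfl
    have b2 : ∑ k : Fin M, ∑ k' : Fin M, (if k < k' then
        ((g - 1) / g) / (2 * Real.sin ((u (Fin.natAdd N k) - u (Fin.natAdd N k')) / 2) ^ 2)
        else 0)
        = ∑ k : Fin M, ∑ k' : Fin M, (if k < k' then
            (g-1)/(2*g) * (pfun N g (Fin.natAdd N k) * pfun N g (Fin.natAdd N k'))
              * (1 / Real.sin ((u (Fin.natAdd N k) - u (Fin.natAdd N k')) / 2) ^ 2) else 0) := by
      refine Finset.sum_congr rfl fun k _ => Finset.sum_congr rfl fun k' _ => ?_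
      split_ifs with h
      · rw [pfun_natAdd, pfun_natAdd,
          show ((-1:ℝ))*(-1) = 1 by norm_num, mul_one, mul_one_div, div_div, div_div]
        congr 1
        ring
      · rfl
    have b3 : ∑ j : Fin N, ∑ k : Fin M,
        (1 - g) / (2 * Real.sin ((u (Fin.castAdd M j) - u (Fin.natAdd N k)) / 2) ^ 2)
        = ∑ j : Fin N, ∑ k : Fin M,
            (g-1)/(2*g) * (pfun N g (Fin.castAdd M j) * pfun N g (Fin.natAdd N k))
              * (1 / Real.sin ((u (Fin.castAdd M j) - u (Fin.natAdd N k)) / 2) ^ 2) := by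
      refine Finset.sum_congr rfl fun j _ => Finset.sum_congr rfl fun k _ => ?_
      rw [pfun_castAdd, pfun_natAdd]
      have hne := regionU_sin_ne hu (a := Fin.castAdd M j) (b := Fin.natAdd N k)
        (ne_of_lt (castAdd_lt_natAdd j k))
      field_simp [hne]
      ring
    have hpt : ∀ a b : Fin (N + M), (if a = b then (0:ℝ) else
        (g-1)/(2*g) * (pfun N g a * pfun N g b) * (1 / Real.sin ((u a - u b) / 2) ^ 2))
        = 2 * ((g-1)/(4*g) * (pfun N g a * pfun N g b)
            * (1 / Real.sin ((u a - u b) / 2) ^ 2)) := by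
      intro a b
      by_cases h : a = b
      · subst h; simp
      · rw [if_neg h]; ring
    rw [b1, b2, b3, ← hblocks]
    have h2 : ∑ a, ∑ b, (if a = b then (0:ℝ) else
        (g-1)/(2*g) * (pfun N g a * pfun N g b) * (1 / Real.sin ((u a - u b) / 2) ^ 2))
        = 2 * ∑ a, ∑ b, (g-1)/(4*g) * (pfun N g a * pfun N g b)
            * (1 / Real.sin ((u a - u b) / 2) ^ 2) := by
      rw [Finset.sum_congr rfl fun a _ => Finset.sum_congr rfl fun b _ => hpt a b]
      rw [pull_const]
    rw [h2] at hsym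
    linarith
  -- big_alg instantiation
  have halg := big_alg g hgne (pfun N g) (pfun_mem N g)
    (fun a b => ctg ((u a - u b) / 2))
    (fun a b => 1 / Real.sin ((u a - u b) / 2) ^ 2)
    (fun a => by simp)
    (fun a => by
      show ctg ((u a - u a) / 2) = 0
      rw [sub_self, zero_div, ctg_zero])
    (fun a b => by
      show (1:ℝ) / Real.sin ((u a - u b) / 2) ^ 2 = 1 / Real.sin ((u b - u a) / 2) ^ 2
      rw [show (u b - u a) / 2 = -((u a - u b) / 2) by ring, Real.sin_neg, neg_sq])
    (fun a b hab => ctg_sq _ (regionU_sin_ne hu hab))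
    (fun a b c h1 h2 h3 => ctg_triple3 (u a) (u b) (u c) (regionU_sin_ne hu h1)
      (regionU_sin_ne hu h2) (regionU_sin_ne hu h3))
  -- power sums
  have hP1 : ∑ i : Fin (N + M), pfun N g i = N * g - M := by
    rw [Fin.sum_univ_add (f := fun i : Fin (N + M) => pfun N g i)]
    rw [Finset.sum_congr rfl fun j _ => pfun_castAdd N M g j,
      Finset.sum_congr rfl fun k _ => pfun_natAdd N M g k]
    simp [Finset.sum_const, Finset.card_univ, nsmul_eq_mul]
    ring
  have hP3 : ∑ i : Fin (N + M), (pfun N g i) ^ 3 = N * g ^ 3 - M := by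
    rw [Fin.sum_univ_add (f := fun i : Fin (N + M) => (pfun N g i) ^ 3)]
    have e1 : ∀ j : Fin N, (pfun N g (Fin.castAdd M j)) ^ 3 = g ^ 3 := fun j => by
      rw [pfun_castAdd]
    have e2 : ∀ k : Fin M, (pfun N g (Fin.natAdd N k)) ^ 3 = -1 := fun k => by
      rw [pfun_natAdd]; norm_num
    rw [Finset.sum_congr rfl fun j _ => e1 j, Finset.sum_congr rfl fun k _ => e2 k]
    simp [Finset.sum_const, Finset.card_univ, nsmul_eq_mul]
    ring
  -- the sigma-weighted sum
  have hsig : -(∑ j : Fin N, Y (Fin.castAdd M j)) + g * ∑ k : Fin M, Y (Fin.natAdd N k)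
      = ∑ i : Fin (N + M), (if (i : ℕ) < N then (-1:ℝ) else g) * Y i := by
    rw [Fin.sum_univ_add (f := fun i : Fin (N + M) => (if (i : ℕ) < N then (-1:ℝ) else g) * Y i)]
    have e1 : ∀ j : Fin N, (if ((Fin.castAdd M j : Fin (N + M)) : ℕ) < N then (-1:ℝ) else g)
        * Y (Fin.castAdd M j) = (-1:ℝ) * Y (Fin.castAdd M j) := fun j => by
      rw [if_pos]
      simpa using j.isLt
    have e2 : ∀ k : Fin M, (if ((Fin.natAdd N k : Fin (N + M)) : ℕ) < N then (-1:ℝ) else g)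
        * Y (Fin.natAdd N k) = g * Y (Fin.natAdd N k) := fun k => by
      rw [if_neg]
      simp
    rw [Finset.sum_congr rfl fun j _ => e1 j, Finset.sum_congr rfl fun k _ => e2 k]
    rw [← Finset.mul_sum, ← Finset.mul_sum]
    ring
  -- the real identity
  have hreal : -(∑ j : Fin N, Y (Fin.castAdd M j)) + g * ∑ k : Fin M, Y (Fin.natAdd N k)
      + ∑ a, ∑ b, (g-1)/(4*g) * (pfun N g a * pfun N g b)
          * (1 / Real.sin ((u a - u b) / 2) ^ 2)
      = g ^ 2 / 12 * (((N : ℝ) - M / g) ^ 3 - ((N : ℝ) - M / g ^ 3)) := by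
    rw [hsig, Finset.sum_congr rfl fun i _ => hsigY i]
    rw [halg, hP1, hP3]
    field_simp
  -- assemble the complex statement
  rw [HNM]
  rw [Finset.sum_congr rfl fun j _ => key (Fin.castAdd M j),
    Finset.sum_congr rfl fun k _ => key (Fin.natAdd N k)]
  rw [hVpot]
  rw [← hreal]
  rw [← Finset.sum_mul, ← Finset.sum_mul]
  push_cast
  ring
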